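/- Let q ≥ 3 be odd and k ≥ 2. For each j ∈ {1,...,k}, let α_i^(j) be the i-th element of the block 0^(j-1)1·reverse(F(n-j,k)) of the binary Gray code F(n,k), and let Γ_j = ε(α_1^(j)) ∘ reverse(ε(α_2^(j))) ∘ ε(α_3^(j)) ∘ ... (alternating, with the last block reversed iff the block count is even). Then F(n,q,k) = Γ_1 ∘ Γ_2 ∘ ... ∘ Γ_k is a Gray code list with Hamming distance 1 for the set of length-n strings over {0,...,q-1} avoiding k consecutive 0's. -/

import Mathlib

def hamming {α : Type*} [DecidableEq α] (u v : List α) : ℕ :=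
  (List.zip u v).countP (fun p => decide (p.1 ≠ p.2))

lemma hamming_nil {α : Type*} [DecidableEq α] (v : List α) : hamming [] v = 0 := rfl

lemma hamming_cons {α : Type*} [DecidableEq α] (a b : α) (u v : List α) :
    hamming (a :: u) (b :: v) = (if a = b then 0 else 1) + hamming u v := by
  simp [hamming, List.countP_cons]
  split <;> omega

lemma hamming_self {α : Type*} [DecidableEq α] (u : List α) : hamming u u = 0 := by
  induction u with
  | nil => rfl
  | cons a u ih => rw [hamming_cons, ih]; simp

lemma hamming_comm {α : Type*} [DecidableEq α] (u v : List α) : hamming u v = hamming v u := by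
  induction u generalizing v with
  | nil => cases v <;> rfl
  | cons a u ih =>
    cases v with
    | nil => rfl
    | cons b v => rw [hamming_cons, hamming_cons, ih]; by_cases h : a = b <;> simp [h, eq_comm]

lemma hamming_append_left {α : Type*} [DecidableEq α] (p u v : List α) :
    hamming (p ++ u) (p ++ v) = hamming u v := by
  induction p with
  | nil => rfl
  | cons a p ih => simpa [hamming_cons] using ih

lemma hamming_cons_same {α : Type*} [DecidableEq α] (a : α) (u v : List α) :
    hamming (a :: u) (a :: v) = hamming u v := by simp [hamming_cons]

def grayN (q : ℕ) : ℕ → List (List ℕ)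
  | 0 => [[]]
  | n+1 => ((List.range q).map (fun i =>
      (if i % 2 = 0 then grayN q n else (grayN q n).reverse).map (fun w => i :: w))).flatten

lemma grayN_succ (q n : ℕ) : grayN q (n+1) = ((List.range q).map (fun i =>
      (if i % 2 = 0 then grayN q n else (grayN q n).reverse).map (fun w => i :: w))).flatten := rfl

lemma mem_grayN {q n : ℕ} (hq : 1 ≤ q) (w : List ℕ) :
    w ∈ grayN q n ↔ w.length = n ∧ ∀ b ∈ w, b < q := by
  induction n generalizing w with
  | zero =>
    simp only [grayN, List.mem_singleton, List.length_eq_zero_iff]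
    constructor
    · rintro rfl; simp
    · tauto
  | succ n ih =>
    rw [grayN_succ]
    simp only [List.mem_flatten, List.mem_map, List.mem_range]
    constructor
    · rintro ⟨l, ⟨i, hi, rfl⟩, hw⟩
      simp only [List.mem_map] at hw
      obtain ⟨v, hv, rfl⟩ := hw
      have hv' : v ∈ grayN q n := by
        split at hv
        · exact hv
        · exact List.mem_reverse.1 hv
      obtain ⟨h1, h2⟩ := (ih v).1 hv'
      refine ⟨by simp [h1], ?_⟩
      intro b hb
      rcases List.mem_cons.1 hb with rfl | hb
      · exact hi
      · exact h2 b hb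
    · rintro ⟨hlen, hb⟩
      cases w with
      | nil => simp at hlen
      | cons a v =>
        refine ⟨_, ⟨a, hb a (by simp), rfl⟩, ?_⟩
        simp only [List.mem_map]
        refine ⟨v, ?_, rfl⟩
        have hv : v ∈ grayN q n := (ih v).2 ⟨by simpa using hlen, fun b hbv => hb b (by simp [hbv])⟩
        split
        · exact hv
        · exact List.mem_reverse.2 hv

lemma head?_grayN {q : ℕ} (hq : 1 ≤ q) (n : ℕ) :
    (grayN q n).head? = some (List.replicate n 0) := by
  induction n with
  | zero => rfl
  | succ n ih =>
    obtain ⟨q', rfl⟩ : ∃ q', q = q' + 1 := ⟨q - 1, by omega⟩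
    rw [grayN_succ, List.range_succ_eq_map]
    simp only [List.map_cons, List.flatten_cons, List.head?_append]
    rw [if_pos (by norm_num), List.head?_map, ih]
    rfl

lemma grayN_ne_nil {q : ℕ} (hq : 1 ≤ q) (n : ℕ) : grayN q n ≠ [] := by
  intro h
  have := head?_grayN hq n
  rw [h] at this
  simp at this

lemma getLast?_grayN {q : ℕ} (hq : 2 ≤ q) (hqe : q % 2 = 0) (n : ℕ) :
    (grayN q (n+1)).getLast? = some ((q-1) :: List.replicate n 0) := by
  obtain ⟨q', rfl⟩ : ∃ q', q = q' + 1 := ⟨q - 1, by omega⟩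
  rw [grayN_succ, List.range_succ]
  simp only [List.map_append, List.flatten_append, List.map_cons, List.map_nil,
    List.flatten_cons, List.flatten_nil, List.append_nil]
  rw [List.getLast?_append_of_ne_nil]
  · rw [if_neg (by omega), List.getLast?_map, List.getLast?_reverse, head?_grayN (by omega)]
    simp
  · rw [if_neg (by omega)]
    simp only [ne_eq, List.map_eq_nil_iff, List.reverse_eq_nil_iff]
    exact grayN_ne_nil (by omega) n

lemma chain'_grayN {q : ℕ} (hq : 1 ≤ q) (n : ℕ) :
    List.Chain' (fun u v => hamming u v = 1) (grayN q n) := by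
  induction n with
  | zero => simp [grayN, List.Chain']
  | succ n ih =>
    rw [grayN_succ]
    have hne : ∀ i, (if i % 2 = 0 then grayN q n else (grayN q n).reverse).map
        (fun w => i :: w) ≠ [] := by
      intro i
      simp only [ne_eq, List.map_eq_nil_iff]
      split
      · exact grayN_ne_nil hq n
      · simp [grayN_ne_nil hq n]
    unfold List.Chain'
    rw [List.isChain_flatten]
    · constructor
      · intro l hl
        simp only [List.mem_map, List.mem_range] at hl
        obtain ⟨i, hi, rfl⟩ := hl
        rw [List.isChain_map]
        have h1 : List.Chain' (fun u v => hamming u v = 1) (grayN q n) := ih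
        have h2 : List.Chain' (fun (u v : List ℕ) => hamming u v = 1) (grayN q n).reverse := by
          unfold List.Chain'
          rw [List.isChain_reverse]
          exact h1.imp (fun a b h => by rwa [hamming_comm])
        split
        · exact h1.imp (fun a b h => by rwa [hamming_cons_same])
        · exact h2.imp (fun a b h => by rwa [hamming_cons_same])
      · rw [List.isChain_map]
        obtain ⟨q', rfl⟩ : ∃ q', q = q' + 1 := ⟨q - 1, by omega⟩
        rw [List.isChain_range_succ]
        intro m hm x hx y hy
        obtain ⟨h, hh⟩ := List.exists_mem_of_ne_nil _ (grayN_ne_nil hq n)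
        rcases Nat.even_or_odd m with he | ho
        · have hm2 : m % 2 = 0 := Nat.even_iff.1 he
          have hm12 : ¬ (m+1) % 2 = 0 := by omega
          rw [if_pos hm2, List.getLast?_map] at hx
          rw [if_neg hm12, List.head?_map, List.head?_reverse] at hy
          have hw1 : (grayN (q'+1) n).getLast? = some ((grayN (q'+1) n).getLast (grayN_ne_nil hq n)) :=
            List.getLast?_eq_getLast _
          rw [hw1] at hx hy
          simp only [Option.map_some, Option.mem_def, Option.some.injEq] at hx hy
          subst hx; subst hy
          rw [hamming_cons, hamming_self, if_neg (by omega)]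
        · have hm2 : ¬ m % 2 = 0 := by
            rcases ho with ⟨c, hc⟩; omega
          have hm12 : (m+1) % 2 = 0 := by omega
          rw [if_neg hm2, List.getLast?_map, List.getLast?_reverse] at hx
          rw [if_pos hm12, List.head?_map] at hy
          have hw1 : (grayN (q'+1) n).head? = some ((grayN (q'+1) n).head (grayN_ne_nil hq n)) :=
            List.head?_eq_head _
          rw [hw1] at hx hy
          simp only [Option.map_some, Option.mem_def, Option.some.injEq] at hx hy
          subst hx; subst hy
          rw [hamming_cons, hamming_self, if_neg (by omega)]
    · intro h
      simp only [List.mem_map, List.mem_range] at h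
      obtain ⟨i, _, hi⟩ := h
      exact hne i hi

lemma nodup_grayN (q n : ℕ) : (grayN q n).Nodup := by
  induction n with
  | zero => simp [grayN]
  | succ n ih =>
    rw [grayN_succ, List.nodup_flatten]
    constructor
    · intro l hl
      simp only [List.mem_map, List.mem_range] at hl
      obtain ⟨i, hi, rfl⟩ := hl
      refine List.Nodup.map (fun a b h => by simpa using h) ?_
      split
      · exact ih
      · exact List.nodup_reverse.2 ih
    · rw [List.pairwise_map]
      refine List.Pairwise.imp ?_ (List.pairwise_lt_range (n := q))
      intro i j hij
      rw [List.disjoint_left]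
      intro x hx hy
      simp only [List.mem_map] at hx hy
      obtain ⟨u, _, rfl⟩ := hx
      obtain ⟨v, _, hv⟩ := hy
      exact absurd (List.cons.injEq .. ▸ hv.symm).1 (by omega)

def C : ℕ → List (List ℕ)
  | 0 => [[]]
  | n+1 => (C n).reverse.map (fun w => 1 :: w) ++ (C n).map (fun w => 0 :: w)

lemma C_eq_reverse_grayN (n : ℕ) : C n = (grayN 2 n).reverse := by
  induction n with
  | zero => rfl
  | succ n ih =>
    have h2 : grayN 2 (n+1) = (grayN 2 n).map (fun w => 0 :: w)
        ++ (grayN 2 n).reverse.map (fun w => 1 :: w) := by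
      rw [grayN_succ]
      norm_num [List.range_succ]
    rw [C, ih, h2]
    simp

lemma mem_C {n : ℕ} (w : List ℕ) : w ∈ C n ↔ w.length = n ∧ ∀ b ∈ w, b < 2 := by
  rw [C_eq_reverse_grayN, List.mem_reverse]
  exact mem_grayN (by norm_num) w

lemma nodup_C (n : ℕ) : (C n).Nodup := by
  rw [C_eq_reverse_grayN]
  exact List.nodup_reverse.2 (nodup_grayN 2 n)

lemma chain'_C (n : ℕ) : List.Chain' (fun u v => hamming u v = 1) (C n) := by
  rw [C_eq_reverse_grayN]
  unfold List.Chain'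
  rw [List.isChain_reverse]
  exact (chain'_grayN (by norm_num) n).imp
    (fun a b h => by rwa [hamming_comm])

lemma C_ne_nil (n : ℕ) : C n ≠ [] := by
  rw [C_eq_reverse_grayN]
  simpa using grayN_ne_nil (by norm_num) n

lemma getLast?_C (n : ℕ) : (C n).getLast? = some (List.replicate n 0) := by
  rw [C_eq_reverse_grayN, List.getLast?_reverse]
  exact head?_grayN (by norm_num) n

lemma head?_C (n : ℕ) : (C (n+1)).head? = some (1 :: List.replicate n 0) := by
  rw [C_eq_reverse_grayN, List.head?_reverse]
  exact getLast?_grayN (by norm_num) (by norm_num) n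

def F (k : ℕ) : ℕ → List (List ℕ)
  | n =>
    if h : n < k ∨ k = 0 then C n
    else ((List.range k).map (fun j =>
      (F k (n - (j+1))).reverse.map (fun w => List.replicate j 0 ++ 1 :: w))).flatten
termination_by n => n
decreasing_by push_neg at h; omega

lemma F_of_lt {k n : ℕ} (h : n < k) : F k n = C n := by
  rw [F]
  rw [dif_pos (Or.inl h)]

lemma F_of_le {k n : ℕ} (hk : 1 ≤ k) (h : k ≤ n) : F k n =
    ((List.range k).map (fun j =>
      (F k (n - (j+1))).reverse.map (fun w => List.replicate j 0 ++ 1 :: w))).flatten := by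
  rw [F]
  rw [dif_neg (by omega)]

lemma not_rep_prefix {k j : ℕ} (h : j < k) (β : List ℕ) :
    ¬ List.replicate k 0 <+: (List.replicate j 0 ++ 1 :: β) := by
  induction j generalizing k with
  | zero =>
    obtain ⟨k', rfl⟩ : ∃ k', k = k' + 1 := ⟨k - 1, by omega⟩
    rw [List.replicate_succ]
    simp [List.cons_prefix_cons]
  | succ j ih =>
    obtain ⟨k', rfl⟩ : ∃ k', k = k' + 1 := ⟨k - 1, by omega⟩
    rw [List.replicate_succ, List.replicate_succ (n := j), List.cons_append,
      List.cons_prefix_cons]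
    rintro ⟨-, hp⟩
    exact ih (by omega) hp

lemma rep_infix_iff {k j : ℕ} (h : j < k) (β : List ℕ) :
    (List.replicate k 0 <:+: (List.replicate j 0 ++ 1 :: β)) ↔
      List.replicate k 0 <:+: β := by
  induction j with
  | zero =>
    simp only [List.replicate_zero, List.nil_append, List.infix_cons_iff]
    have := not_rep_prefix h β
    simp only [List.replicate_zero, List.nil_append] at this
    tauto
  | succ j ih =>
    rw [List.replicate_succ (n := j), List.cons_append, List.infix_cons_iff]
    have h1 := not_rep_prefix h (β := β)
    rw [List.replicate_succ (n := j), List.cons_append] at h1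
    have h2 := ih (by omega)
    tauto

lemma F_ne_nil {k : ℕ} (hk : 1 ≤ k) (n : ℕ) : F k n ≠ [] := by
  induction n using Nat.strong_induction_on with
  | _ n ih =>
    by_cases h : n < k
    · rw [F_of_lt h]; exact C_ne_nil n
    · rw [F_of_le hk (by omega)]
      intro hcon
      rw [List.flatten_eq_nil_iff] at hcon
      obtain ⟨k', rfl⟩ : ∃ k', k = k' + 1 := ⟨k - 1, by omega⟩
      have h0 := hcon ((F (k'+1) (n - 1)).reverse.map
        (fun w => List.replicate 0 0 ++ 1 :: w)) (by
          simp only [List.mem_map, List.mem_range]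
          exact ⟨0, by omega, rfl⟩)
      simp only [List.map_eq_nil_iff, List.reverse_eq_nil_iff] at h0
      exact ih (n-1) (by omega) h0

lemma F_head_succ {k : ℕ} (hk : 1 ≤ k) (m : ℕ) :
    ∃ x, (F k m).getLast? = some x ∧ (F k (m+1)).head? = some (1 :: x) := by
  by_cases h : m + 1 < k
  · refine ⟨List.replicate m 0, ?_, ?_⟩
    · rw [F_of_lt (by omega)]; exact getLast?_C m
    · rw [F_of_lt h]; exact head?_C m
  · obtain ⟨k', rfl⟩ : ∃ k', k = k' + 1 := ⟨k - 1, by omega⟩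
    rw [F_of_le hk (n := m + 1) (by omega), List.range_succ_eq_map]
    have hgl : (F (k'+1) m).getLast? = some ((F (k'+1) m).getLast (F_ne_nil hk m)) :=
      List.getLast?_eq_getLast _
    refine ⟨_, hgl, ?_⟩
    simp only [List.map_cons, List.flatten_cons]
    rw [List.head?_append_of_ne_nil, List.head?_map, List.head?_reverse]
    · have h0 : m + 1 - (0 + 1) = m := by omega
      rw [h0, hgl]
      simp
    · have h0 : m + 1 - (0 + 1) = m := by omega
      rw [h0]
      simp only [ne_eq, List.map_eq_nil_iff, List.reverse_eq_nil_iff]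
      exact F_ne_nil hk m

lemma mem_F {k : ℕ} (hk : 1 ≤ k) (n : ℕ) (α : List ℕ) :
    α ∈ F k n ↔ α.length = n ∧ (∀ b ∈ α, b < 2) ∧ ¬ List.replicate k 0 <:+: α := by
  induction n using Nat.strong_induction_on generalizing α with
  | _ n ih =>
    by_cases h : n < k
    · rw [F_of_lt h, mem_C]
      constructor
      · rintro ⟨h1, h2⟩
        refine ⟨h1, h2, fun hcon => ?_⟩
        have := hcon.length_le
        simp [h1] at this
        omega
      · tauto
    · rw [F_of_le hk (by omega)]
      simp only [List.mem_flatten, List.mem_map, List.mem_range]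
      constructor
      · rintro ⟨l, ⟨j, hj, rfl⟩, hα⟩
        simp only [List.mem_map, List.mem_reverse] at hα
        obtain ⟨β, hβ, rfl⟩ := hα
        obtain ⟨h1, h2, h3⟩ := (ih (n - (j+1)) (by omega) β).1 hβ
        refine ⟨by simp [h1]; omega, ?_, ?_⟩
        · intro b hb
          simp only [List.mem_append, List.mem_cons, List.mem_replicate] at hb
          rcases hb with hb | hb | hb
          · omega
          · omega
          · exact h2 b hb
        · rw [rep_infix_iff hj]
          exact h3
      · rintro ⟨h1, h2, h3⟩
        -- find the first 1
        have key : ∀ (α : List ℕ) (k : ℕ), (∀ b ∈ α, b < 2) →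
            ¬ List.replicate k 0 <+: α → k ≤ α.length →
            ∃ j β, j < k ∧ α = List.replicate j 0 ++ 1 :: β := by
          intro α
          induction α with
          | nil =>
            intro k _ hp hl
            simp at hl
            subst hl
            simp at hp
          | cons b α' ihα =>
            intro k hb hp hl
            have hb2 : b < 2 := hb b (by simp)
            obtain ⟨k', rfl⟩ : ∃ k', k = k' + 1 := by
              rcases Nat.eq_zero_or_pos k with rfl | hh
              · simp at hp
              · exact ⟨k - 1, by omega⟩
            interval_cases b
            · rw [List.replicate_succ, List.cons_prefix_cons] at hp
              push_neg at hp
              obtain ⟨j, β, hjk, hab⟩ := ihα k' (fun x hx => hb x (by simp [hx]))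
                (hp rfl) (by simpa using hl)
              exact ⟨j + 1, β, by omega, by rw [List.replicate_succ, List.cons_append, hab]⟩
            · exact ⟨0, α', by omega, by simp⟩
        obtain ⟨j, β, hjk, rfl⟩ := key α k h2 (fun hcon => h3 hcon.isInfix) (by omega)
        refine ⟨_, ⟨j, hjk, rfl⟩, ?_⟩
        simp only [List.mem_map, List.mem_reverse]
        refine ⟨β, ?_, rfl⟩
        rw [ih (n - (j+1)) (by omega)]
        refine ⟨?_, fun b hb => h2 b (by simp [hb]), ?_⟩
        · have := h1
          simp only [List.length_append, List.length_replicate, List.length_cons] at this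
          omega
        · rw [← rep_infix_iff hjk]
          exact h3

lemma getElem?_zeros_one_self (j : ℕ) (u : List ℕ) :
    (List.replicate j 0 ++ 1 :: u)[j]? = some 1 := by
  rw [List.getElem?_append_right (by simp)]
  simp

lemma getElem?_zeros_one_lt {i j : ℕ} (h : i < j) (u : List ℕ) :
    (List.replicate j 0 ++ 1 :: u)[i]? = some 0 := by
  rw [List.getElem?_append_left (by simpa using h)]
  simp [h]

lemma nodup_F {k : ℕ} (hk : 1 ≤ k) (n : ℕ) : (F k n).Nodup := by
  induction n using Nat.strong_induction_on with
  | _ n ih =>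
    by_cases h : n < k
    · rw [F_of_lt h]; exact nodup_C n
    · rw [F_of_le hk (by omega), List.nodup_flatten]
      constructor
      · intro l hl
        simp only [List.mem_map, List.mem_range] at hl
        obtain ⟨j, hj, rfl⟩ := hl
        refine List.Nodup.map (fun a b hab => by simpa using hab)
          (List.nodup_reverse.2 (ih _ (by omega)))
      · rw [List.pairwise_map]
        refine List.Pairwise.imp ?_ (List.pairwise_lt_range (n := k))
        intro i j hij
        rw [List.disjoint_left]
        intro x hx hy
        simp only [List.mem_map] at hx hy
        obtain ⟨u, _, rfl⟩ := hx
        obtain ⟨v, _, hv⟩ := hy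
        have h1 := getElem?_zeros_one_self i u
        rw [← hv, getElem?_zeros_one_lt hij] at h1
        simp at h1

lemma chain'_F {k : ℕ} (hk : 1 ≤ k) (n : ℕ) :
    List.Chain' (fun u v => hamming u v = 1) (F k n) := by
  induction n using Nat.strong_induction_on with
  | _ n ih =>
    by_cases h : n < k
    · rw [F_of_lt h]; exact chain'_C n
    · rw [F_of_le hk (by omega)]
      unfold List.Chain'
      rw [List.isChain_flatten]
      · constructor
        · intro l hl
          simp only [List.mem_map, List.mem_range] at hl
          obtain ⟨j, hj, rfl⟩ := hl
          rw [List.isChain_map]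
          have : List.Chain' (fun (u v : List ℕ) => hamming u v = 1)
              (F k (n - (j+1))).reverse := by
            unfold List.Chain'
            rw [List.isChain_reverse]
            exact (ih _ (by omega)).imp
              (fun a b hab => by rwa [hamming_comm])
          refine this.imp (fun a b hab => ?_)
          rw [hamming_append_left, hamming_cons_same]
          exact hab
        · rw [List.isChain_map]
          obtain ⟨k', rfl⟩ : ∃ k', k = k' + 1 := ⟨k - 1, by omega⟩
          rw [List.isChain_range_succ]
          intro m hm x hx y hy
          obtain ⟨x₀, hx₀l, hx₀h⟩ := F_head_succ hk (n - m - 2)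
          have e1 : n - (m+1) = n - m - 2 + 1 := by omega
          have e2 : n - (m+1+1) = n - m - 2 := by omega
          rw [List.getLast?_map, List.getLast?_reverse, e1, hx₀h] at hx
          rw [List.head?_map, List.head?_reverse, e2, hx₀l] at hy
          simp only [Option.map_some, Option.mem_def, Option.some.injEq] at hx hy
          subst hx; subst hy
          rw [List.replicate_succ' (n := m)]
          rw [List.append_assoc, hamming_append_left, List.singleton_append,
            hamming_cons, hamming_cons_same, hamming_self]
          simp
      · intro hcon
        simp only [List.mem_map, List.mem_range] at hcon
        obtain ⟨j, hj, hj2⟩ := hcon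
        rw [List.map_eq_nil_iff, List.reverse_eq_nil_iff] at hj2
        exact F_ne_nil hk _ hj2

def place : List ℕ → List ℕ → List ℕ
  | [], _ => []
  | b :: β, x => if b = 0 then 0 :: place β x else x.headD 1 :: place β x.tail

def supp (w : List ℕ) : List ℕ := w.map (fun b => if b = 0 then 0 else 1)

def ones (w : List ℕ) : List ℕ := w.filter (fun b => decide (b ≠ 0))

lemma length_place (α x : List ℕ) : (place α x).length = α.length := by
  induction α generalizing x with
  | nil => rfl
  | cons b β ih =>
    rw [place]
    split <;> simp [ih]

lemma place_ones {α x : List ℕ} (hα : ∀ b ∈ α, b < 2) (hx : ∀ y ∈ x, y = 1) :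
    place α x = α := by
  induction α generalizing x with
  | nil => rfl
  | cons b β ih =>
    rw [place]
    have hb : b < 2 := hα b (by simp)
    split
    · rename_i hb0
      rw [ih (fun c hc => hα c (by simp [hc])) hx, hb0]
    · have h1 : b = 1 := by omega
      have hhead : x.headD 1 = 1 := by
        cases x with
        | nil => rfl
        | cons y ys => simpa using hx y (by simp)
      have htail : ∀ y ∈ x.tail, y = 1 := fun y hy => hx y (List.mem_of_mem_tail hy)
      rw [hhead, ih (fun c hc => hα c (by simp [hc])) htail, h1]

lemma place_decomp (j : ℕ) (β x : List ℕ) :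
    place (List.replicate j 0 ++ 1 :: β) x =
      List.replicate j 0 ++ x.headD 1 :: place β x.tail := by
  induction j with
  | zero => simp [place]
  | succ j ih => simp [List.replicate_succ, place, ih]

lemma hamming_place {α x y : List ℕ} (hα : ∀ b ∈ α, b < 2)
    (hx : x.length = α.count 1) (hy : y.length = α.count 1) :
    hamming (place α x) (place α y) = hamming x y := by
  induction α generalizing x y with
  | nil =>
    simp only [List.count_nil, List.length_eq_zero_iff] at hx hy
    subst hx; subst hy; rfl
  | cons b β ih =>
    have hb : b < 2 := hα b (by simp)
    have hβ : ∀ c ∈ β, c < 2 := fun c hc => hα c (by simp [hc])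
    rcases (by omega : b = 0 ∨ b = 1) with rfl | rfl
    · rw [place, place, if_pos rfl, if_pos rfl, hamming_cons_same]
      rw [List.count_cons_of_ne (by omega : (0:ℕ) ≠ 1)] at hx hy
      exact ih hβ hx hy
    · rw [place, place, if_neg (by omega : ¬ (1:ℕ) = 0), if_neg (by omega : ¬ (1:ℕ) = 0)]
      rw [List.count_cons_self] at hx hy
      obtain ⟨x₀, x', rfl⟩ : ∃ a l, x = a :: l := by
        cases x
        · simp at hx
        · exact ⟨_, _, rfl⟩
      obtain ⟨y₀, y', rfl⟩ : ∃ a l, y = a :: l := by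
        cases y
        · simp at hy
        · exact ⟨_, _, rfl⟩
      simp only [List.headD_cons, List.tail_cons]
      rw [hamming_cons, hamming_cons, ih hβ (by simpa using hx) (by simpa using hy)]

lemma supp_cons (b : ℕ) (w : List ℕ) :
    supp (b :: w) = (if b = 0 then 0 else 1) :: supp w := rfl

lemma ones_cons_zero (w : List ℕ) : ones (0 :: w) = ones w := by
  simp [ones, List.filter_cons]

lemma ones_cons_ne {b : ℕ} (hb : b ≠ 0) (w : List ℕ) : ones (b :: w) = b :: ones w := by
  simp only [ones, List.filter_cons]
  rw [if_pos (by simpa using hb)]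

lemma supp_place {α x : List ℕ} (hα : ∀ b ∈ α, b < 2) (hx : ∀ y ∈ x, 1 ≤ y) :
    supp (place α x) = α := by
  induction α generalizing x with
  | nil => rfl
  | cons b β ih =>
    have hb : b < 2 := hα b (by simp)
    have hβ : ∀ c ∈ β, c < 2 := fun c hc => hα c (by simp [hc])
    rcases (by omega : b = 0 ∨ b = 1) with rfl | rfl
    · rw [place, if_pos rfl, supp_cons, if_pos rfl, ih hβ hx]
    · rw [place, if_neg (by omega : ¬ (1:ℕ) = 0), supp_cons]
      have hhead : ¬ x.headD 1 = 0 := by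
        cases x with
        | nil => simp
        | cons y ys => have := hx y (by simp); simp; omega
      rw [if_neg hhead, ih hβ (fun y hy => hx y (List.mem_of_mem_tail hy))]

lemma ones_place {α x : List ℕ} (hα : ∀ b ∈ α, b < 2) (hx : ∀ y ∈ x, 1 ≤ y)
    (hlen : x.length = α.count 1) : ones (place α x) = x := by
  induction α generalizing x with
  | nil =>
    simp only [List.count_nil, List.length_eq_zero_iff] at hlen
    subst hlen; rfl
  | cons b β ih =>
    have hb : b < 2 := hα b (by simp)
    have hβ : ∀ c ∈ β, c < 2 := fun c hc => hα c (by simp [hc])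
    rcases (by omega : b = 0 ∨ b = 1) with rfl | rfl
    · rw [List.count_cons_of_ne (by omega : (0:ℕ) ≠ 1)] at hlen
      rw [place, if_pos rfl, ones_cons_zero, ih hβ hx hlen]
    · rw [List.count_cons_self] at hlen
      obtain ⟨x₀, x', rfl⟩ : ∃ a l, x = a :: l := by
        cases x
        · simp at hlen
        · exact ⟨_, _, rfl⟩
      have hx₀ : 1 ≤ x₀ := hx x₀ (by simp)
      rw [place, if_neg (by omega : ¬ (1:ℕ) = 0)]
      simp only [List.headD_cons, List.tail_cons]
      rw [ones_cons_ne (by omega), ih hβ (fun y hy => hx y (by simp [hy])) (by simpa using hlen)]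

lemma place_supp_ones (w : List ℕ) : place (supp w) (ones w) = w := by
  induction w with
  | nil => rfl
  | cons b w ih =>
    by_cases hb : b = 0
    · subst hb
      rw [supp_cons, if_pos rfl, ones_cons_zero, place, if_pos rfl, ih]
    · rw [supp_cons, if_neg hb, ones_cons_ne hb, place, if_neg (by omega : ¬ (1:ℕ) = 0)]
      simp only [List.headD_cons, List.tail_cons]
      rw [ih]

lemma count_supp (w : List ℕ) : (supp w).count 1 = (ones w).length := by
  induction w with
  | nil => rfl
  | cons b w ih =>
    by_cases hb : b = 0
    · subst hb
      rw [supp_cons, if_pos rfl, ones_cons_zero, List.count_cons_of_ne (by omega : (0:ℕ) ≠ 1), ih]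
    · rw [supp_cons, if_neg hb, ones_cons_ne hb, List.count_cons_self, List.length_cons, ih]

lemma length_supp (w : List ℕ) : (supp w).length = w.length := by simp [supp]

lemma supp_lt_two (w : List ℕ) : ∀ b ∈ supp w, b < 2 := by
  intro b hb
  simp only [supp, List.mem_map] at hb
  obtain ⟨a, _, rfl⟩ := hb
  split <;> omega

lemma mem_ones {w : List ℕ} : ∀ y ∈ ones w, 1 ≤ y := by
  intro y hy
  simp only [ones, List.mem_filter, decide_eq_true_eq, ne_eq] at hy
  omega

lemma mem_place {α x : List ℕ} {b : ℕ} (hb : b ∈ place α x) : b = 0 ∨ b = 1 ∨ b ∈ x := by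
  induction α generalizing x with
  | nil => simp [place] at hb
  | cons c β ih =>
    rw [place] at hb
    split at hb
    · rcases List.mem_cons.1 hb with rfl | hb
      · left; rfl
      · exact ih hb
    · rcases List.mem_cons.1 hb with rfl | hb
      · cases x with
        | nil => right; left; rfl
        | cons y ys => right; right; simp
      · rcases ih hb with h | h | h
        · left; exact h
        · right; left; exact h
        · right; right; exact List.mem_of_mem_tail h

lemma rep_prefix_supp (k : ℕ) (w : List ℕ) :
    List.replicate k 0 <+: supp w ↔ List.replicate k 0 <+: w := by
  induction k generalizing w with
  | zero => simp
  | succ k ih =>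
    cases w with
    | nil => simp [supp, List.replicate_succ]
    | cons b w =>
      rw [supp_cons, List.replicate_succ, List.cons_prefix_cons, List.cons_prefix_cons, ih]
      by_cases hb : b = 0
      · simp [hb]
      · simp only [if_neg hb]
        constructor
        · rintro ⟨h0, -⟩; omega
        · rintro ⟨h0, -⟩; omega

lemma rep_infix_supp (k : ℕ) (w : List ℕ) :
    List.replicate k 0 <:+: supp w ↔ List.replicate k 0 <:+: w := by
  induction w with
  | nil => rfl
  | cons b w ih =>
    rw [supp_cons, List.infix_cons_iff, List.infix_cons_iff, ih]
    rw [show (if b = 0 then 0 else 1) :: supp w = supp (b :: w) from rfl]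
    have := rep_prefix_supp k (b :: w)
    tauto

def expansion (q : ℕ) (β : List ℕ) : List (List ℕ) :=
  ((grayN (q-1) (β.count 1)).map (fun w => w.map (· + 1))).map (place β)

lemma hamming_map_succ (x y : List ℕ) :
    hamming (x.map (· + 1)) (y.map (· + 1)) = hamming x y := by
  induction x generalizing y with
  | nil => cases y <;> rfl
  | cons a x ih =>
    cases y with
    | nil => rfl
    | cons b y =>
      simp only [List.map_cons]
      rw [hamming_cons, hamming_cons, ih]
      by_cases h : a = b <;> simp [h]

lemma expansion_ne_nil {q : ℕ} (hq : 2 ≤ q) (β : List ℕ) : expansion q β ≠ [] := by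
  simp only [expansion, ne_eq, List.map_eq_nil_iff]
  exact grayN_ne_nil (by omega) _

lemma mem_expansion {q : ℕ} (hq : 2 ≤ q) {β : List ℕ} (hβ : ∀ b ∈ β, b < 2) (w : List ℕ) :
    w ∈ expansion q β ↔ supp w = β ∧ ∀ b ∈ w, b < q := by
  constructor
  · intro hw
    simp only [expansion, List.map_map, List.mem_map, Function.comp] at hw
    obtain ⟨g, hg, rfl⟩ := hw
    obtain ⟨hg1, hg2⟩ := (mem_grayN (by omega) g).1 hg
    have hx1 : ∀ y ∈ g.map (· + 1), 1 ≤ y := by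
      intro y hy
      simp only [List.mem_map] at hy
      obtain ⟨a, _, rfl⟩ := hy
      omega
    refine ⟨supp_place hβ hx1, ?_⟩
    intro b hb
    rcases mem_place hb with rfl | rfl | hb
    · omega
    · omega
    · simp only [List.mem_map] at hb
      obtain ⟨a, ha, rfl⟩ := hb
      have := hg2 a ha
      omega
  · rintro ⟨hsupp, hlt⟩
    simp only [expansion, List.map_map, List.mem_map, Function.comp]
    refine ⟨(ones w).map (· - 1), ?_, ?_⟩
    · rw [mem_grayN (by omega)]
      constructor
      · rw [List.length_map, ← count_supp, hsupp]
      · intro b hb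
        simp only [List.mem_map] at hb
        obtain ⟨a, ha, rfl⟩ := hb
        have h1 := mem_ones a ha
        have h2 : a ∈ w := List.mem_of_mem_filter ha
        have := hlt a h2
        omega
    · have : ((ones w).map (· - 1)).map (· + 1) = ones w := by
        rw [List.map_map]
        conv_rhs => rw [← List.map_id (ones w)]
        refine List.map_congr_left ?_
        intro a ha
        have := mem_ones a ha
        simp only [Function.comp, id]
        omega
      rw [this, ← hsupp, place_supp_ones]

lemma chain'_imp_mem {α : Type*} {R S : α → α → Prop} {l : List α} (h : List.Chain' R l)
    (H : ∀ a ∈ l, ∀ b ∈ l, R a b → S a b) : List.Chain' S l := by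
  induction l with
  | nil => simp [List.Chain']
  | cons a l ih =>
    cases l with
    | nil => simp [List.Chain']
    | cons b l' =>
      unfold List.Chain' at h ⊢
      rw [List.isChain_cons_cons] at h ⊢
      exact ⟨H a (by simp) b (by simp) h.1,
        ih h.2 (fun x hx y hy hr => H x (by simp [hx]) y (by simp [hy]) hr)⟩

lemma chain'_expansion {q : ℕ} (hq : 2 ≤ q) {β : List ℕ} (hβ : ∀ b ∈ β, b < 2) :
    List.Chain' (fun u v => hamming u v = 1) (expansion q β) := by
  rw [expansion, List.map_map]
  unfold List.Chain'
  rw [List.isChain_map]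
  refine chain'_imp_mem (chain'_grayN (by omega) _) ?_
  intro a ha b hb h
  obtain ⟨ha1, -⟩ := (mem_grayN (by omega : 1 ≤ q - 1) a).1 ha
  obtain ⟨hb1, -⟩ := (mem_grayN (by omega : 1 ≤ q - 1) b).1 hb
  simp only [Function.comp]
  rw [hamming_place hβ (by simpa using ha1) (by simpa using hb1), hamming_map_succ]
  exact h

lemma head?_expansion {q : ℕ} (hq : 2 ≤ q) {β : List ℕ} (hβ : ∀ b ∈ β, b < 2) :
    (expansion q β).head? = some β := by
  rw [expansion, List.map_map, List.head?_map, head?_grayN (by omega)]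
  simp only [Option.map_some, Option.some.injEq, Function.comp, List.map_replicate]
  exact place_ones hβ (fun y hy => ((List.eq_of_mem_replicate hy) : y = 0 + 1))

lemma getLast?_expansion {q : ℕ} (hq3 : 3 ≤ q) (hqodd : q % 2 = 1)
    {j : ℕ} {γ : List ℕ} (hγ : ∀ b ∈ γ, b < 2) :
    (expansion q (List.replicate j 0 ++ 1 :: γ)).getLast? =
      some (List.replicate j 0 ++ (q - 1) :: γ) := by
  have hcount : (List.replicate j 0 ++ 1 :: γ).count 1 = γ.count 1 + 1 := by
    rw [List.count_append, List.count_replicate, List.count_cons_self]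
    simp
  rw [expansion, List.map_map, List.getLast?_map, hcount,
    getLast?_grayN (by omega) (by omega)]
  simp only [Option.map_some, Option.some.injEq, Function.comp, List.map_cons,
    List.map_replicate]
  rw [place_decomp]
  simp only [List.headD_cons, List.tail_cons]
  rw [place_ones hγ (fun y hy => ((List.eq_of_mem_replicate hy) : y = 0 + 1))]
  congr 2
  omega

lemma nodup_expansion {q : ℕ} (hq : 2 ≤ q) {β : List ℕ} (hβ : ∀ b ∈ β, b < 2) :
    (expansion q β).Nodup := by
  rw [expansion, List.map_map]
  refine List.Nodup.map_on ?_ (nodup_grayN _ _)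
  intro g hg g' hg' heq
  obtain ⟨hg1, -⟩ := (mem_grayN (by omega : 1 ≤ q - 1) g).1 hg
  obtain ⟨hg1', -⟩ := (mem_grayN (by omega : 1 ≤ q - 1) g').1 hg'
  simp only [Function.comp] at heq
  have h1 : ones (place β (g.map (· + 1))) = g.map (· + 1) :=
    ones_place hβ (by intro y hy; simp only [List.mem_map] at hy; obtain ⟨a,-,rfl⟩ := hy; omega)
      (by simpa using hg1)
  have h1' : ones (place β (g'.map (· + 1))) = g'.map (· + 1) :=
    ones_place hβ (by intro y hy; simp only [List.mem_map] at hy; obtain ⟨a,-,rfl⟩ := hy; omega)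
      (by simpa using hg1')
  have h2 : g.map (· + 1) = g'.map (· + 1) := by rw [← h1, ← h1', heq]
  exact List.map_injective_iff.2 (fun a b hab => by omega) h2

def alt {α : Type*} (Ls : List (List α)) : List α :=
  (Ls.zipIdx.map (fun p => if p.2 % 2 = 0 then p.1 else p.1.reverse)).flatten

def altR {α : Type*} : Bool → List (List α) → List α
  | _, [] => []
  | false, L :: Ls => L ++ altR true Ls
  | true, L :: Ls => L.reverse ++ altR false Ls

lemma alt_eq_altR {α : Type*} (Ls : List (List α)) : alt Ls = altR false Ls := by
  have key : ∀ (Ls : List (List α)) (n : ℕ),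
      ((Ls.zipIdx n).map (fun p => if p.2 % 2 = 0 then p.1 else p.1.reverse)).flatten =
        altR (decide (n % 2 = 1)) Ls := by
    intro Ls
    induction Ls with
    | nil => intro n; cases hd : decide (n % 2 = 1) <;> rfl
    | cons L Ls ih =>
      intro n
      rw [List.zipIdx_cons, List.map_cons, List.flatten_cons, ih (n+1)]
      rcases (by omega : n % 2 = 0 ∨ n % 2 = 1) with h | h
      · have h1 : decide (n % 2 = 1) = false := by simp [h]
        have h2 : decide ((n+1) % 2 = 1) = true := by simp; omega
        rw [h1, h2, altR, if_pos h]
      · have h1 : decide (n % 2 = 1) = true := by simp [h]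
        have h2 : decide ((n+1) % 2 = 1) = false := by simp; omega
        rw [h1, h2, altR, if_neg (by omega)]
  rw [alt, key]
  norm_num

lemma mem_altR {α : Type*} (b : Bool) (Ls : List (List α)) (x : α) :
    x ∈ altR b Ls ↔ ∃ L ∈ Ls, x ∈ L := by
  induction Ls generalizing b with
  | nil => cases b <;> simp [altR]
  | cons L Ls ih =>
    cases b
    · rw [altR, List.mem_append, ih]
      simp
    · rw [altR, List.mem_append, ih]
      simp

lemma altR_ne_nil {α : Type*} {b : Bool} {L : List α} {Ls : List (List α)} (hL : L ≠ []) :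
    altR b (L :: Ls) ≠ [] := by
  cases b
  · rw [altR]
    simp only [ne_eq, List.append_eq_nil_iff, not_and]
    intro hcon
    exact absurd hcon hL
  · rw [altR]
    simp only [ne_eq, List.append_eq_nil_iff, not_and, List.reverse_eq_nil_iff]
    intro hcon
    exact absurd hcon hL

lemma head?_altR_false {α : Type*} {L : List α} (hL : L ≠ []) (Ls : List (List α)) :
    (altR false (L :: Ls)).head? = L.head? := by
  rw [altR, List.head?_append_of_ne_nil _ hL]

lemma getLast?_altR {α : Type*} {Ls : List (List α)} (hne : Ls ≠ [])
    (hall : ∀ L ∈ Ls, L ≠ []) (b : Bool) :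
    (altR b Ls).getLast? = (Ls.getLast hne).getLast? ∨
      (altR b Ls).getLast? = (Ls.getLast hne).head? := by
  induction Ls generalizing b with
  | nil => exact absurd rfl hne
  | cons L Ls ih =>
    cases Ls with
    | nil =>
      cases b
      · left
        rw [altR]
        simp [altR]
      · right
        rw [altR]
        simp [altR, List.getLast?_reverse]
    | cons L' Ls' =>
      have hrec := ih (by simp) (fun x hx => hall x (by simp [hx])) (!b)
      rw [List.getLast_cons (show L' :: Ls' ≠ [] by simp)]
      cases b
      · rw [altR, List.getLast?_append_of_ne_nil _ (altR_ne_nil (hall L' (by simp)))]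
        exact hrec
      · rw [altR, List.getLast?_append_of_ne_nil _ (altR_ne_nil (hall L' (by simp)))]
        exact hrec

lemma nodup_altR {α : Type*} {Ls : List (List α)} (hnd : ∀ L ∈ Ls, L.Nodup)
    (hdisj : Ls.Pairwise List.Disjoint) (b : Bool) : (altR b Ls).Nodup := by
  induction Ls generalizing b with
  | nil => cases b <;> simp [altR]
  | cons L Ls ih =>
    rw [List.pairwise_cons] at hdisj
    have hrest := ih (fun x hx => hnd x (by simp [hx])) hdisj.2
    have hLnd := hnd L (by simp)
    have hdis : ∀ (b' : Bool), List.Disjoint L (altR b' Ls) := by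
      intro b' x hx hy
      rw [mem_altR] at hy
      obtain ⟨L', hL', hxL'⟩ := hy
      exact hdisj.1 L' hL' hx hxL'
    cases b
    · rw [altR]
      exact List.Nodup.append hLnd (hrest true) (hdis true)
    · rw [altR]
      refine List.Nodup.append (List.nodup_reverse.2 hLnd) (hrest false) ?_
      intro x hx hy
      exact hdis false (List.mem_reverse.1 hx) hy

lemma chain'_altR {α : Type*} {R : α → α → Prop} (hsymm : ∀ a b, R a b → R b a)
    {Ls : List (List α)} (hall : ∀ L ∈ Ls, L ≠ []) (hchain : ∀ L ∈ Ls, List.Chain' R L)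
    (hS : Ls.Chain' (fun L₁ L₂ =>
      (∀ x ∈ L₁.head?, ∀ y ∈ L₂.head?, R x y) ∧
      (∀ x ∈ L₁.getLast?, ∀ y ∈ L₂.getLast?, R x y))) (b : Bool) :
    List.Chain' R (altR b Ls) := by
  induction Ls generalizing b with
  | nil => cases b <;> simp [altR, List.Chain']
  | cons L Ls ih =>
    have hLc : List.Chain' R L := hchain L (by simp)
    have hLrc : List.Chain' R L.reverse := by
      unfold List.Chain'
      rw [List.isChain_reverse]
      exact hLc.imp (fun a b h => hsymm a b h)
    cases Ls with
    | nil =>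
      cases b
      · rw [altR]
        simpa [altR] using hLc
      · rw [altR]
        simpa [altR] using hLrc
    | cons L' Ls' =>
      unfold List.Chain' at hS
      rw [List.isChain_cons_cons] at hS
      have hrest := fun b' => ih (fun x hx => hall x (by simp [hx]))
        (fun x hx => hchain x (by simp [hx])) hS.2 b'
      have hL'ne := hall L' (by simp)
      cases b
      · rw [altR]
        unfold List.Chain'
        rw [List.isChain_append]
        refine ⟨hLc, hrest true, ?_⟩
        intro x hx y hy
        rw [altR, List.head?_append_of_ne_nil _ (by simpa using hL'ne),
          List.head?_reverse] at hy
        exact hS.1.2 x hx y hy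
      · rw [altR]
        unfold List.Chain'
        rw [List.isChain_append]
        refine ⟨hLrc, hrest false, ?_⟩
        intro x hx y hy
        rw [List.getLast?_reverse] at hx
        rw [altR, List.head?_append_of_ne_nil _ hL'ne] at hy
        exact hS.1.1 x hx y hy

def Gamma (q k n j : ℕ) : List (List ℕ) :=
  alt (((F k (n - j)).reverse.map
    (fun w => List.replicate (j - 1) 0 ++ 1 :: w)).map (expansion q))

def Fodd (q k n : ℕ) : List (List ℕ) :=
  ((List.range k).map (fun j => Gamma q k n (j + 1))).flatten

def Blist (k n j : ℕ) : List (List ℕ) :=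
  (F k (n - (j+1))).reverse.map (fun w => List.replicate j 0 ++ 1 :: w)

lemma Gamma_eq (q k n j : ℕ) :
    Gamma q k n (j+1) = altR false ((Blist k n j).map (expansion q)) := by
  rw [Gamma, alt_eq_altR, Blist]
  norm_num

lemma Blist_ne_nil {k n j : ℕ} (hk : 1 ≤ k) : Blist k n j ≠ [] := by
  rw [Blist]
  simp only [ne_eq, List.map_eq_nil_iff, List.reverse_eq_nil_iff]
  exact F_ne_nil hk _

lemma mem_Blist_binary {k n j : ℕ} (hk : 1 ≤ k) {α : List ℕ} (hα : α ∈ Blist k n j) :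
    ∀ b ∈ α, b < 2 := by
  rw [Blist] at hα
  simp only [List.mem_map, List.mem_reverse] at hα
  obtain ⟨w, hw, rfl⟩ := hα
  obtain ⟨-, h2, -⟩ := (mem_F hk _ w).1 hw
  intro b hb
  simp only [List.mem_append, List.mem_cons, List.mem_replicate] at hb
  rcases hb with hb | hb | hb
  · omega
  · omega
  · exact h2 b hb

lemma Gamma_ne_nil {q k n j : ℕ} (hq : 2 ≤ q) (hk : 1 ≤ k) : Gamma q k n (j+1) ≠ [] := by
  rw [Gamma_eq]
  obtain ⟨α, hα⟩ := List.exists_mem_of_ne_nil _ (Blist_ne_nil (n := n) (j := j) hk)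
  obtain ⟨x, hx⟩ := List.exists_mem_of_ne_nil _ (expansion_ne_nil hq α)
  have : x ∈ altR false ((Blist k n j).map (expansion q)) := by
    rw [mem_altR]
    exact ⟨expansion q α, List.mem_map_of_mem hα, hx⟩
  exact List.ne_nil_of_mem this

lemma mem_Gamma {q k n j : ℕ} (hq : 2 ≤ q) (hk : 1 ≤ k) (x : List ℕ) :
    x ∈ Gamma q k n (j+1) ↔
      (∃ w ∈ F k (n - (j+1)), supp x = List.replicate j 0 ++ 1 :: w) ∧ ∀ b ∈ x, b < q := by
  rw [Gamma_eq, mem_altR]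
  constructor
  · rintro ⟨L, hL, hxL⟩
    simp only [List.mem_map] at hL
    obtain ⟨α, hα, rfl⟩ := hL
    have hbin := mem_Blist_binary hk hα
    obtain ⟨h1, h2⟩ := (mem_expansion hq hbin x).1 hxL
    rw [Blist] at hα
    simp only [List.mem_map, List.mem_reverse] at hα
    obtain ⟨w, hw, rfl⟩ := hα
    exact ⟨⟨w, hw, h1⟩, h2⟩
  · rintro ⟨⟨w, hw, hsupp⟩, hlt⟩
    have hmem : List.replicate j 0 ++ 1 :: w ∈ Blist k n j := by
      rw [Blist]
      exact List.mem_map_of_mem (List.mem_reverse.2 hw)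
    refine ⟨expansion q (List.replicate j 0 ++ 1 :: w), List.mem_map_of_mem hmem, ?_⟩
    rw [mem_expansion hq (mem_Blist_binary hk hmem) x]
    exact ⟨hsupp, hlt⟩

lemma chain'_Gamma {q k n j : ℕ} (hq3 : 3 ≤ q) (hqodd : q % 2 = 1) (hk : 1 ≤ k) :
    List.Chain' (fun u v => hamming u v = 1) (Gamma q k n (j+1)) := by
  have hq : 2 ≤ q := by omega
  rw [Gamma_eq]
  refine chain'_altR (fun a b h => by rwa [hamming_comm]) ?_ ?_ ?_ false
  · intro L hL
    simp only [List.mem_map] at hL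
    obtain ⟨α, hα, rfl⟩ := hL
    exact expansion_ne_nil hq α
  · intro L hL
    simp only [List.mem_map] at hL
    obtain ⟨α, hα, rfl⟩ := hL
    exact chain'_expansion hq (mem_Blist_binary hk hα)
  · rw [Blist, List.map_map]
    unfold List.Chain'
    rw [List.isChain_map]
    have base : List.Chain' (fun (w w' : List ℕ) => w ∈ F k (n - (j+1)) ∧
        w' ∈ F k (n - (j+1)) ∧ hamming w w' = 1) (F k (n - (j+1))).reverse := by
      refine chain'_imp_mem ?_ (fun a ha b hb h =>
        ⟨List.mem_reverse.1 ha, List.mem_reverse.1 hb, h⟩)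
      unfold List.Chain'
      rw [List.isChain_reverse]
      exact (chain'_F hk _).imp (fun a b h => by
        rwa [hamming_comm])
    refine base.imp ?_
    rintro w w' ⟨hw, hw', h⟩
    obtain ⟨-, hwbin, -⟩ := (mem_F hk _ w).1 hw
    obtain ⟨-, hwbin', -⟩ := (mem_F hk _ w').1 hw'
    simp only [Function.comp]
    constructor
    · intro x hx y hy
      rw [head?_expansion hq (by
          intro b hb
          simp only [List.mem_append, List.mem_cons, List.mem_replicate] at hb
          rcases hb with hb | hb | hb
          · omega
          · omega
          · exact hwbin b hb)] at hx
      rw [head?_expansion hq (by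
          intro b hb
          simp only [List.mem_append, List.mem_cons, List.mem_replicate] at hb
          rcases hb with hb | hb | hb
          · omega
          · omega
          · exact hwbin' b hb)] at hy
      simp only [Option.mem_def, Option.some.injEq] at hx hy
      subst hx; subst hy
      rwa [hamming_append_left, hamming_cons_same]
    · intro x hx y hy
      rw [getLast?_expansion hq3 hqodd hwbin] at hx
      rw [getLast?_expansion hq3 hqodd hwbin'] at hy
      simp only [Option.mem_def, Option.some.injEq] at hx hy
      subst hx; subst hy
      rwa [hamming_append_left, hamming_cons_same]

lemma head?_Gamma {q k n j : ℕ} (hq : 2 ≤ q) (hk : 1 ≤ k) :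
    (Gamma q k n (j+1)).head? =
      some (List.replicate j 0 ++ 1 :: (F k (n - (j+1))).getLast (F_ne_nil hk _)) := by
  rw [Gamma_eq]
  obtain ⟨L, Ls, hLs⟩ : ∃ L Ls, (Blist k n j).map (expansion q) = L :: Ls := by
    cases h : (Blist k n j).map (expansion q) with
    | nil =>
      rw [List.map_eq_nil_iff] at h
      exact absurd h (Blist_ne_nil hk)
    | cons L Ls => exact ⟨L, Ls, rfl⟩
  rw [hLs]
  have hLval : L.head? = some (List.replicate j 0 ++ 1 ::
      (F k (n - (j+1))).getLast (F_ne_nil hk _)) := by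
    have h1 : ((Blist k n j).map (expansion q)).head? = some L := by rw [hLs]; rfl
    rw [List.head?_map, Blist, List.head?_map, List.head?_reverse,
      List.getLast?_eq_getLast (F_ne_nil hk _)] at h1
    simp only [Option.map_some, Option.some.injEq] at h1
    rw [← h1]
    rw [head?_expansion hq]
    have hmem : List.replicate j 0 ++ 1 :: (F k (n - (j+1))).getLast (F_ne_nil hk _) ∈
        Blist k n j := by
      rw [Blist]
      exact List.mem_map_of_mem (List.mem_reverse.2 (List.getLast_mem _))
    exact mem_Blist_binary hk hmem
  rw [head?_altR_false _ Ls]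
  · exact hLval
  · intro hcon
    rw [hcon] at hLval
    simp at hLval

lemma getLast?_Gamma {q k n j : ℕ} (hq3 : 3 ≤ q) (hqodd : q % 2 = 1) (hk : 1 ≤ k)
    (hn : 1 ≤ n - (j+1)) :
    ∃ l, (F k (n - (j+1) - 1)).getLast? = some l ∧
      ((Gamma q k n (j+1)).getLast? = some (List.replicate j 0 ++ 1 :: 1 :: l) ∨
       (Gamma q k n (j+1)).getLast? = some (List.replicate j 0 ++ (q-1) :: 1 :: l)) := by
  have hq : 2 ≤ q := by omega
  obtain ⟨l, hl, hhead⟩ := F_head_succ hk (n - (j+1) - 1)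
  have hm : n - (j+1) - 1 + 1 = n - (j+1) := by omega
  rw [hm] at hhead
  refine ⟨l, hl, ?_⟩
  rw [Gamma_eq]
  have hall : ∀ L ∈ (Blist k n j).map (expansion q), L ≠ [] := by
    intro L hL
    simp only [List.mem_map] at hL
    obtain ⟨α, hα, rfl⟩ := hL
    exact expansion_ne_nil hq α
  have hne : (Blist k n j).map (expansion q) ≠ [] := by
    simp only [ne_eq, List.map_eq_nil_iff]
    exact Blist_ne_nil hk
  have hLs : ((Blist k n j).map (expansion q)).getLast? =
      some (expansion q (List.replicate j 0 ++ 1 :: 1 :: l)) := by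
    rw [List.getLast?_map, Blist, List.getLast?_map, List.getLast?_reverse, hhead]
    rfl
  have hlasteq : ((Blist k n j).map (expansion q)).getLast hne =
      expansion q (List.replicate j 0 ++ 1 :: 1 :: l) := by
    have h2 := List.getLast?_eq_getLast hne
    exact (Option.some.inj (hLs.symm.trans h2)).symm
  have hlbin : ∀ b ∈ (1 : ℕ) :: l, b < 2 := by
    have h1 : (1 : ℕ) :: l ∈ F k (n - (j+1)) := by
      have h3 := List.head?_eq_head (F_ne_nil hk (n - (j+1)))
      rw [hhead] at h3
      rw [Option.some.inj h3]
      exact List.head_mem _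
    exact ((mem_F hk _ _).1 h1).2.1
  obtain h | h := getLast?_altR hne hall false
  · right
    rw [h, hlasteq, getLast?_expansion hq3 hqodd]
    intro b hb
    exact hlbin b hb
  · left
    rw [h, hlasteq, head?_expansion hq]
    intro b hb
    simp only [List.mem_append, List.mem_cons, List.mem_replicate] at hb
    rcases hb with hb | hb | hb
    · omega
    · omega
    · exact hlbin b (by simp [hb])

lemma nodup_Gamma {q k n j : ℕ} (hq : 2 ≤ q) (hk : 1 ≤ k) : (Gamma q k n (j+1)).Nodup := by
  rw [Gamma_eq]
  refine nodup_altR ?_ ?_ false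
  · intro L hL
    simp only [List.mem_map] at hL
    obtain ⟨α, hα, rfl⟩ := hL
    exact nodup_expansion hq (mem_Blist_binary hk hα)
  · rw [List.pairwise_map]
    have hnd : (Blist k n j).Nodup := by
      rw [Blist]
      refine List.Nodup.map ?_ (List.nodup_reverse.2 (nodup_F hk _))
      intro a b hab
      have := List.append_cancel_left hab
      simpa using this
    refine List.Pairwise.imp_of_mem ?_ hnd
    intro α β hα hβ hne x hx hy
    have h1 := ((mem_expansion hq (mem_Blist_binary hk hα) x).1 hx).1
    have h2 := ((mem_expansion hq (mem_Blist_binary hk hβ) x).1 hy).1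
    exact hne (h1.symm.trans h2)

lemma mem_Fodd {q k n : ℕ} (hq : 2 ≤ q) (hk : 1 ≤ k) (hn : k ≤ n) (x : List ℕ) :
    x ∈ Fodd q k n ↔ supp x ∈ F k n ∧ ∀ b ∈ x, b < q := by
  rw [Fodd]
  simp only [List.mem_flatten, List.mem_map, List.mem_range]
  constructor
  · rintro ⟨L, ⟨j, hj, rfl⟩, hx⟩
    rw [mem_Gamma hq hk] at hx
    obtain ⟨⟨w, hw, hsupp⟩, hlt⟩ := hx
    refine ⟨?_, hlt⟩
    rw [F_of_le hk hn]
    simp only [List.mem_flatten, List.mem_map, List.mem_range]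
    exact ⟨_, ⟨j, hj, rfl⟩, by
      simp only [List.mem_map, List.mem_reverse]
      exact ⟨w, hw, hsupp.symm⟩⟩
  · rintro ⟨hmem, hlt⟩
    rw [F_of_le hk hn] at hmem
    simp only [List.mem_flatten, List.mem_map, List.mem_range] at hmem
    obtain ⟨L, ⟨j, hj, rfl⟩, hx⟩ := hmem
    simp only [List.mem_map, List.mem_reverse] at hx
    obtain ⟨w, hw, hsupp⟩ := hx
    refine ⟨Gamma q k n (j+1), ⟨j, hj, rfl⟩, ?_⟩
    rw [mem_Gamma hq hk]
    exact ⟨⟨w, hw, hsupp.symm⟩, hlt⟩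

/-- For `q ≥ 3` odd and `k ≥ 2`, the list `F(n,q,k) = Γ_1 ∘ ⋯ ∘ Γ_k` is a Gray code
list with Hamming distance `1` for the set of length-`n` strings over `{0,...,q-1}`
avoiding `k` consecutive `0`'s. -/
theorem stmt14 (q k n : ℕ) (hq : Odd q) (hq3 : 3 ≤ q) (hk : 2 ≤ k) (hn : k ≤ n) :
    List.Chain' (fun u v => hamming u v = 1) (Fodd q k n) ∧
    (Fodd q k n).Nodup ∧
    (∀ w : List ℕ, w ∈ Fodd q k n ↔
      (w.length = n ∧ (∀ b ∈ w, b < q) ∧ ¬ (List.replicate k 0 <:+: w))) := by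
  have hqodd : q % 2 = 1 := Nat.odd_iff.1 hq
  have hq2 : 2 ≤ q := by omega
  have hk1 : 1 ≤ k := by omega
  refine ⟨?_, ?_, ?_⟩
  · -- Chain'
    rw [Fodd]
    unfold List.Chain'
    rw [List.isChain_flatten]
    · refine ⟨?_, ?_⟩
      · intro L hL
        simp only [List.mem_map, List.mem_range] at hL
        obtain ⟨j, hj, rfl⟩ := hL
        exact chain'_Gamma hq3 hqodd hk1
      · rw [List.isChain_map]
        obtain ⟨k', rfl⟩ : ∃ k', k = k' + 1 := ⟨k - 1, by omega⟩
        rw [List.isChain_range_succ]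
        intro m hm x hx y hy
        set k := k' + 1 with hkdef
        obtain ⟨l, hl, hor⟩ := getLast?_Gamma (k := k) (n := n) (j := m) hq3 hqodd hk1
          (by omega)
        rw [head?_Gamma hq2 hk1] at hy
        have hleq : (F k (n - (m+1+1))).getLast (F_ne_nil hk1 _) = l := by
          have h2 := List.getLast?_eq_getLast (l := F k (n - (m+1+1))) (F_ne_nil hk1 _)
          have hl' : (F k (n - (m+1+1))).getLast? = some l := by
            rw [show n - (m+1+1) = n - (m+1) - 1 from by omega]
            exact hl
          exact Option.some.inj (h2.symm.trans hl')
        simp only [Option.mem_def, Option.some.injEq] at hy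
        rw [hleq] at hy
        subst hy
        have hyform : List.replicate (m+1) 0 ++ 1 :: l =
            List.replicate m 0 ++ 0 :: 1 :: l := by
          rw [List.replicate_succ' (n := m), List.append_assoc]
          rfl
        rcases hor with h | h
        · rw [h] at hx
          simp only [Option.mem_def, Option.some.injEq] at hx
          subst hx
          rw [hyform, hamming_append_left, hamming_cons, hamming_cons_same, hamming_self]
          simp
        · rw [h] at hx
          simp only [Option.mem_def, Option.some.injEq] at hx
          subst hx
          rw [hyform, hamming_append_left, hamming_cons, hamming_cons_same, hamming_self]
          rw [if_neg (by omega)]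
    · intro hcon
      simp only [List.mem_map, List.mem_range] at hcon
      obtain ⟨j, -, hj⟩ := hcon
      exact Gamma_ne_nil hq2 hk1 hj
  · -- Nodup
    rw [Fodd, List.nodup_flatten]
    constructor
    · intro L hL
      simp only [List.mem_map, List.mem_range] at hL
      obtain ⟨j, hj, rfl⟩ := hL
      exact nodup_Gamma hq2 hk1
    · rw [List.pairwise_map]
      refine List.Pairwise.imp ?_ (List.pairwise_lt_range (n := k))
      intro i j hij
      rw [List.disjoint_left]
      intro x hx hy
      rw [mem_Gamma hq2 hk1] at hx hy
      obtain ⟨⟨w, -, hw⟩, -⟩ := hx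
      obtain ⟨⟨w', -, hw'⟩, -⟩ := hy
      have h1 := getElem?_zeros_one_self i w
      rw [← hw, hw', getElem?_zeros_one_lt hij] at h1
      simp at h1
  · -- membership
    intro w
    rw [mem_Fodd hq2 hk1 hn, mem_F hk1]
    rw [length_supp, rep_infix_supp]
    constructor
    · rintro ⟨⟨h1, -, h3⟩, h4⟩
      exact ⟨h1, h4, h3⟩
    · rintro ⟨h1, h2, h3⟩
      exact ⟨⟨h1, supp_lt_two w, h3⟩, h2⟩
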